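/- Let ψ(x) = x^r and ρ(x) = x^p with r > 1, p ≥ 1. Then the function (ψ* ∘ ρ*)* is equivalent to x ↦ x^{rp/(r+p−1)}. -/

import Mathlib

open Filter Topology MeasureTheory
open scoped ENNReal
noncomputable section

/-- A Young function: strictly increasing, convex on `[0,∞)`, vanishing at `0`. -/
def IsYoung (f : ℝ → ℝ) : Prop :=
  StrictMonoOn f (Set.Ici 0) ∧ ConvexOn ℝ (Set.Ici 0) f ∧ f 0 = 0

/-- Legendre transform of a real function (sup over `y ≥ 0`), `ℝ≥0∞`-valued. -/
def Leg (f : ℝ → ℝ) (x : ℝ) : ℝ≥0∞ :=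
  ⨆ y : {y : ℝ // 0 ≤ y}, ENNReal.ofReal (x * y - f y)

/-- Legendre transform of an `ℝ≥0∞`-valued function. -/
def LegE (f : ℝ → ℝ≥0∞) (x : ℝ) : ℝ≥0∞ :=
  ⨆ y : {y : ℝ // 0 ≤ y}, (ENNReal.ofReal (x * y) - f y)

/-- Monotone extension of a real function on `[0,∞)` to `ℝ≥0∞` arguments. -/
def extE (f : ℝ → ℝ) (t : ℝ≥0∞) : ℝ≥0∞ :=
  ⨆ s : {s : ℝ // 0 ≤ s ∧ ENNReal.ofReal s ≤ t}, ENNReal.ofReal (f s)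

/-- Monotone extension of an `ℝ≥0∞`-valued function to `ℝ≥0∞` arguments. -/
def extLT (f : ℝ → ℝ≥0∞) (t : ℝ≥0∞) : ℝ≥0∞ :=
  ⨆ s : {s : ℝ // 0 ≤ s ∧ ENNReal.ofReal s ≤ t}, f s

/-- Generalized (right-continuous) inverse of an `ℝ≥0∞`-valued function. -/
def invE (g : ℝ → ℝ≥0∞) (t : ℝ≥0∞) : ℝ≥0∞ :=
  ⨅ s : {s : ℝ // 0 ≤ s ∧ t ≤ g s}, ENNReal.ofReal s

/-- `ρ(x) = sup_{y ≥ 0} (φ(xy) - ψ(y))/y`. -/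
def rhoSup (φ ψ : ℝ → ℝ) (x : ℝ) : ℝ≥0∞ :=
  ⨆ y : {y : ℝ // 0 ≤ y}, ENNReal.ofReal ((φ (x * y) - ψ y) / y)

/-- `ζ(x) = sup_{y ≥ 0} (φ(xy) - ψ(y)/y)`. -/
def zetaSup (φ ψ : ℝ → ℝ) (x : ℝ) : ℝ≥0∞ :=
  ⨆ y : {y : ℝ // 0 ≤ y}, ENNReal.ofReal (φ (x * y) - ψ y / y)

/-- Domination order on real functions: `f(x) ≤ C₁ g(C₂ x)` for large `x`. -/
def DominR (f g : ℝ → ℝ) : Prop :=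
  ∃ C₁ C₂ x₀ : ℝ, 0 < C₁ ∧ 0 < C₂ ∧ 0 < x₀ ∧ ∀ x ≥ x₀, f x ≤ C₁ * g (C₂ * x)

/-- Equivalence of real functions: mutual domination. -/
def EquivR (f g : ℝ → ℝ) : Prop := DominR f g ∧ DominR g f

/-- Domination order on `ℝ≥0∞`-valued functions. -/
def DominE (f g : ℝ → ℝ≥0∞) : Prop :=
  ∃ C₁ C₂ x₀ : ℝ, 0 < C₁ ∧ 0 < C₂ ∧ 0 < x₀ ∧
    ∀ x ≥ x₀, f x ≤ ENNReal.ofReal C₁ * g (C₂ * x)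

/-- Equivalence of `ℝ≥0∞`-valued functions: mutual domination. -/
def EquivE (f g : ℝ → ℝ≥0∞) : Prop := DominE f g ∧ DominE g f

/-! ### Auxiliary lemmas -/

lemma leg_ge (f : ℝ → ℝ) (x z : ℝ) (hz : 0 ≤ z) :
    ENNReal.ofReal (x * z - f z) ≤ Leg f x :=
  le_iSup (fun y : {y : ℝ // 0 ≤ y} => ENNReal.ofReal (x * (y : ℝ) - f y)) ⟨z, hz⟩

lemma leg_le {f : ℝ → ℝ} {x M : ℝ} (h : ∀ z, 0 ≤ z → x * z - f z ≤ M) :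
    Leg f x ≤ ENNReal.ofReal M :=
  iSup_le fun y => ENNReal.ofReal_le_ofReal (h y y.2)

lemma legE_ge (g : ℝ → ℝ≥0∞) (x z : ℝ) (hz : 0 ≤ z) :
    ENNReal.ofReal (x * z) - g z ≤ LegE g x :=
  le_iSup (fun y : {y : ℝ // 0 ≤ y} => ENNReal.ofReal (x * (y : ℝ)) - g y) ⟨z, hz⟩

lemma legE_le {g : ℝ → ℝ≥0∞} {x : ℝ} {M : ℝ≥0∞}
    (h : ∀ z, 0 ≤ z → ENNReal.ofReal (x * z) - g z ≤ M) : LegE g x ≤ M :=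
  iSup_le fun y => h y y.2

lemma extLT_ge {f : ℝ → ℝ≥0∞} {t : ℝ≥0∞} {s : ℝ} (hs : 0 ≤ s) (hst : ENNReal.ofReal s ≤ t) :
    f s ≤ extLT f t :=
  le_iSup (fun u : {u : ℝ // 0 ≤ u ∧ ENNReal.ofReal u ≤ t} => f u) ⟨s, hs, hst⟩

lemma extLT_le {f : ℝ → ℝ≥0∞} {t M : ℝ≥0∞}
    (h : ∀ s, 0 ≤ s → ENNReal.ofReal s ≤ t → f s ≤ M) : extLT f t ≤ M :=
  iSup_le fun s => h s s.2.1 s.2.2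

/-- Witness lower bound: `Leg (·^p) y ≥ ((y/2)^(p/(p-1)))`. -/
lemma leg_rpow_ge {p : ℝ} (hp : 1 < p) {y : ℝ} (hy : 0 ≤ y) :
    ENNReal.ofReal ((y / 2) ^ (p / (p - 1))) ≤ Leg (fun t => t ^ p) y := by
  have hp1 : (0:ℝ) < p - 1 := by linarith
  have h2 : (0:ℝ) ≤ y / 2 := by linarith
  set z := (y / 2) ^ (1 / (p - 1)) with hzdef
  have hz0 : 0 ≤ z := Real.rpow_nonneg h2 _
  have hzp : z ^ p = (y / 2) ^ (1 / (p - 1) * p) := by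
    rw [Real.rpow_mul h2]
  have key : y * z - z ^ p = (y / 2) ^ (p / (p - 1)) := by
    have hyz : y * z = 2 * ((y / 2) ^ ((1:ℝ) + 1 / (p - 1))) := by
      rw [Real.rpow_add' h2 (by positivity), Real.rpow_one]
      ring
    have he1 : (1:ℝ) + 1 / (p - 1) = p / (p - 1) := by field_simp; ring
    have he2 : 1 / (p - 1) * p = p / (p - 1) := by rw [div_mul_eq_mul_div, one_mul]
    rw [hyz, hzp, he1, he2]; ring
  calc ENNReal.ofReal ((y / 2) ^ (p / (p - 1)))
      = ENNReal.ofReal (y * z - z ^ p) := by rw [key]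
    _ ≤ Leg (fun t => t ^ p) y := leg_ge _ y z hz0

/-- Young upper bound: `Leg (·^p) y ≤ y^(p/(p-1))`. -/
lemma leg_rpow_le {p : ℝ} (hp : 1 < p) {y : ℝ} (hy : 0 ≤ y) :
    Leg (fun t => t ^ p) y ≤ ENNReal.ofReal (y ^ (p / (p - 1))) := by
  apply leg_le
  intro z hz
  have hpq : p.HolderConjugate (p / (p - 1)) := .conjExponent hp
  have hY := Real.young_inequality_of_nonneg hz hy hpq
  have h1 : z ^ p / p ≤ z ^ p := div_le_self (Real.rpow_nonneg hz p) hpq.lt.le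
  have h2 : y ^ (p / (p - 1)) / (p / (p - 1)) ≤ y ^ (p / (p - 1)) :=
    div_le_self (Real.rpow_nonneg hy _) hpq.symm.lt.le
  have hc : y * z = z * y := mul_comm y z
  linarith

/-- If ψ(x) = x^r and ρ(x) = x^p with r > 1, p ≥ 1, then
(ψ* ∘ ρ*)* ≃ x^(rp/(r+p−1)). -/
theorem stmt14 (p r : ℝ) (hp : 1 ≤ p) (hr : 1 < r) :
    EquivE (LegE (fun y => extLT (Leg (fun t => t ^ r)) (Leg (fun t => t ^ p) y)))
      (fun x => ENNReal.ofReal (x ^ (r * p / (r + p - 1)))) := by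
  have hr1 : (0:ℝ) < r - 1 := by linarith
  have hr' : 1 < r / (r - 1) := (one_lt_div hr1).2 (by linarith)
  rcases eq_or_lt_of_le hp with hp1 | hp1
  · -- degenerate case p = 1
    subst hp1
    have he : r * 1 / (r + 1 - 1) = 1 := by
      rw [mul_one, add_sub_cancel_right, div_self (by linarith : r ≠ 0)]
    constructor
    · refine ⟨1, 1, 1, one_pos, one_pos, one_pos, ?_⟩
      intro x hx
      have hx0 : (0:ℝ) ≤ x := by linarith
      show LegE _ x ≤ ENNReal.ofReal 1 * ENNReal.ofReal ((1 * x) ^ (r * 1 / (r + 1 - 1)))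
      rw [ENNReal.ofReal_one, one_mul, one_mul, he, Real.rpow_one]
      apply legE_le
      intro z hz
      by_cases hz1 : z ≤ 1
      · calc ENNReal.ofReal (x * z) - _ ≤ ENNReal.ofReal (x * z) := tsub_le_self
          _ ≤ ENNReal.ofReal x := ENNReal.ofReal_le_ofReal (by nlinarith)
      · push_neg at hz1
        have hxz : (0:ℝ) ≤ x * z := by nlinarith
        have key : ENNReal.ofReal (x * z) ≤
            extLT (Leg (fun t => t ^ r)) (Leg (fun t => t ^ (1:ℝ)) z) := by
          have hs0 : (0:ℝ) ≤ 2 * (x * z + 1) := by nlinarith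
          have hw0 : (0:ℝ) ≤ 2 * (x * z + 1) / (z - 1) := div_nonneg hs0 (by linarith)
          have hw : ENNReal.ofReal (2 * (x * z + 1)) ≤ Leg (fun t => t ^ (1:ℝ)) z := by
            have h := leg_ge (fun t => t ^ (1:ℝ)) z (2 * (x * z + 1) / (z - 1)) hw0
            have hz1' : z - 1 ≠ 0 := ne_of_gt (by linarith)
            have hcalc : z * (2 * (x * z + 1) / (z - 1)) - (2 * (x * z + 1) / (z - 1)) ^ (1:ℝ)
                = 2 * (x * z + 1) := by
              rw [Real.rpow_one]
              have hre : z * (2 * (x * z + 1) / (z - 1)) - 2 * (x * z + 1) / (z - 1)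
                  = (z - 1) * (2 * (x * z + 1)) / (z - 1) := by ring
              rw [hre, mul_div_cancel_left₀ _ hz1']
            rw [hcalc] at h
            exact h
          refine le_trans ?_ (extLT_ge hs0 hw)
          have h1 := leg_rpow_ge hr hs0
          refine le_trans (ENNReal.ofReal_le_ofReal ?_) h1
          have hs2 : 2 * (x * z + 1) / 2 = x * z + 1 := by ring
          rw [hs2]
          calc x * z ≤ x * z + 1 := by linarith
            _ = (x * z + 1) ^ (1:ℝ) := (Real.rpow_one _).symm
            _ ≤ (x * z + 1) ^ (r / (r - 1)) :=
                Real.rpow_le_rpow_of_exponent_le (by linarith) hr'.le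
        rw [tsub_eq_zero_of_le key]
        exact zero_le
    · refine ⟨1, 1, 1, one_pos, one_pos, one_pos, ?_⟩
      intro x hx
      show ENNReal.ofReal ((x : ℝ) ^ (r * 1 / (r + 1 - 1))) ≤ ENNReal.ofReal 1 * LegE _ (1 * x)
      rw [ENNReal.ofReal_one, one_mul, one_mul, he, Real.rpow_one]
      have hg1 : extLT (Leg (fun t => t ^ r)) (Leg (fun t => t ^ (1:ℝ)) 1) = 0 := by
        refine le_antisymm ?_ zero_le
        have h0 : extLT (Leg (fun t => t ^ r)) (Leg (fun t => t ^ (1:ℝ)) 1)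
            ≤ ENNReal.ofReal 0 := by
          apply extLT_le
          intro s hs hst
          have hlp : Leg (fun t => t ^ (1:ℝ)) 1 ≤ ENNReal.ofReal 0 :=
            leg_le (fun z hz => by rw [Real.rpow_one]; linarith)
          have hsle : ENNReal.ofReal s ≤ ENNReal.ofReal 0 := hst.trans hlp
          have hs0 : s ≤ 0 := (ENNReal.ofReal_le_ofReal_iff le_rfl).1 hsle
          have hseq : s = 0 := le_antisymm hs0 hs
          subst hseq
          apply leg_le
          intro w hw
          have : (0:ℝ) ≤ w ^ r := Real.rpow_nonneg hw r
          linarith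
        simpa using h0
      have h := legE_ge (fun y => extLT (Leg (fun t => t ^ r)) (Leg (fun t => t ^ (1:ℝ)) y))
          x 1 zero_le_one
      simp only [mul_one] at h
      rw [hg1, tsub_zero] at h
      exact h
  · -- main case 1 < p
    have hpp1 : (0:ℝ) < p - 1 := by linarith
    have hp' : 1 < p / (p - 1) := (one_lt_div hpp1).2 (by linarith)
    set σ : ℝ := p / (p - 1) * (r / (r - 1)) with hσdef
    have hσ1 : 1 < σ := by nlinarith [hp', hr']
    have hσ0 : 0 < σ := by linarith
    have hσs : (0:ℝ) < σ - 1 := by linarith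
    set c : ℝ := 2 ^ ((p / (p - 1) + 1) * (r / (r - 1))) with hcdef
    have hc1 : 1 ≤ c := Real.one_le_rpow one_le_two (by positivity)
    have hc0 : (0:ℝ) < c := by linarith
    set q : ℝ := r * p / (r + p - 1) with hqdef
    have hrp1 : (0:ℝ) < r + p - 1 := by linarith
    have hq_eq : σ / (σ - 1) = q := by
      rw [hσdef, hqdef]
      have h1 : p - 1 ≠ 0 := ne_of_gt hpp1
      have h2 : r - 1 ≠ 0 := ne_of_gt hr1
      have h3 : r + p - 1 ≠ 0 := ne_of_gt hrp1
      have hd : p / (p - 1) * (r / (r - 1)) - 1 = (r + p - 1) / ((p - 1) * (r - 1)) := by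
        field_simp
        ring
      rw [hd]
      field_simp
    have hconjσ : σ.HolderConjugate q := by
      have h := Real.HolderConjugate.conjExponent hσ1
      rwa [Real.conjExponent, hq_eq] at h
    have hq1 : 1 < q := hconjσ.symm.lt
    -- upper bound for the inner composed function
    have g_ub : ∀ y : ℝ, 0 ≤ y →
        extLT (Leg (fun t => t ^ r)) (Leg (fun t => t ^ p) y) ≤ ENNReal.ofReal (y ^ σ) := by
      intro y hy
      apply extLT_le
      intro s hs hst
      have h2 := hst.trans (leg_rpow_le hp1 hy)
      have h1 : s ≤ y ^ (p / (p - 1)) :=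
        (ENNReal.ofReal_le_ofReal_iff (Real.rpow_nonneg hy _)).1 h2
      calc Leg (fun t => t ^ r) s ≤ ENNReal.ofReal (s ^ (r / (r - 1))) := leg_rpow_le hr hs
        _ ≤ ENNReal.ofReal ((y ^ (p / (p - 1))) ^ (r / (r - 1))) :=
            ENNReal.ofReal_le_ofReal (Real.rpow_le_rpow hs h1 (by positivity))
        _ = ENNReal.ofReal (y ^ σ) := by rw [hσdef, Real.rpow_mul hy]
    -- lower bound for the inner composed function
    have g_lb : ∀ y : ℝ, 0 ≤ y →
        ENNReal.ofReal (y ^ σ / c) ≤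
          extLT (Leg (fun t => t ^ r)) (Leg (fun t => t ^ p) y) := by
      intro y hy
      have hy2 : (0:ℝ) ≤ y / 2 := by linarith
      have hs0 : (0:ℝ) ≤ (y / 2) ^ (p / (p - 1)) := Real.rpow_nonneg hy2 _
      have h1 : ENNReal.ofReal ((y / 2) ^ (p / (p - 1))) ≤ Leg (fun t => t ^ p) y :=
        leg_rpow_ge hp1 hy
      have h2 : Leg (fun t => t ^ r) ((y / 2) ^ (p / (p - 1))) ≤
          extLT (Leg (fun t => t ^ r)) (Leg (fun t => t ^ p) y) := extLT_ge hs0 h1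
      have h3 := leg_rpow_ge hr hs0
      refine le_trans (ENNReal.ofReal_le_ofReal ?_) (h3.trans h2)
      have e1 : (y / 2) ^ (p / (p - 1)) = y ^ (p / (p - 1)) / 2 ^ (p / (p - 1)) :=
        Real.div_rpow hy (by norm_num) _
      have e2 : (y / 2) ^ (p / (p - 1)) / 2 = y ^ (p / (p - 1)) / 2 ^ (p / (p - 1) + 1) := by
        rw [e1, div_div, ← Real.rpow_add_one (two_ne_zero) (p / (p - 1))]
      have e3 : ((y / 2) ^ (p / (p - 1)) / 2) ^ (r / (r - 1)) = y ^ σ / c := by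
        rw [e2, Real.div_rpow (Real.rpow_nonneg hy _) (Real.rpow_nonneg (by norm_num) _),
          ← Real.rpow_mul hy, ← Real.rpow_mul (by norm_num : (0:ℝ) ≤ 2), hσdef, hcdef]
      rw [e3]
    -- Young-type real inequality for the outer transform
    have I4 : ∀ x z : ℝ, 0 ≤ x → 0 ≤ z → x * z - z ^ σ / c ≤ c ^ q * x ^ q := by
      intro x z hx hz
      have hY := Real.young_inequality_of_nonneg (a := c * x) (b := z / c)
        (by positivity) (by positivity) hconjσ.symm
      have e0 : c * x * (z / c) = x * z := by field_simp
      have e1 : (c * x) ^ q = c ^ q * x ^ q := Real.mul_rpow hc0.le hx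
      have h1 : (c * x) ^ q / q ≤ c ^ q * x ^ q := by
        rw [e1]; exact div_le_self (by positivity) hq1.le
      have h2 : (z / c) ^ σ / σ ≤ z ^ σ / c := by
        rw [Real.div_rpow hz hc0.le, div_div]
        have hcc : c ≤ c ^ σ * σ :=
          calc c = c ^ (1:ℝ) := (Real.rpow_one c).symm
            _ ≤ c ^ σ := Real.rpow_le_rpow_of_exponent_le hc1 hσ1.le
            _ = c ^ σ * 1 := (mul_one _).symm
            _ ≤ c ^ σ * σ := mul_le_mul_of_nonneg_left hσ1.le (Real.rpow_nonneg hc0.le σ)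
        exact div_le_div_of_nonneg_left (Real.rpow_nonneg hz σ) hc0 hcc
      rw [e0] at hY
      linarith
    constructor
    · -- F ≲ x^q
      refine ⟨c ^ q, 1, 1, by positivity, one_pos, one_pos, ?_⟩
      intro x hx
      have hx0 : (0:ℝ) ≤ x := by linarith
      show LegE _ x ≤ ENNReal.ofReal (c ^ q) * ENNReal.ofReal ((1 * x) ^ q)
      rw [one_mul]
      apply legE_le
      intro z hz
      have h1 : ENNReal.ofReal (x * z) -
          extLT (Leg (fun t => t ^ r)) (Leg (fun t => t ^ p) z) ≤
          ENNReal.ofReal (x * z) - ENNReal.ofReal (z ^ σ / c) :=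
        tsub_le_tsub_left (g_lb z hz) _
      refine h1.trans ?_
      rw [← ENNReal.ofReal_sub _ (by positivity)]
      calc ENNReal.ofReal (x * z - z ^ σ / c)
          ≤ ENNReal.ofReal (c ^ q * x ^ q) := ENNReal.ofReal_le_ofReal (I4 x z hx0 hz)
        _ = ENNReal.ofReal (c ^ q) * ENNReal.ofReal (x ^ q) :=
            ENNReal.ofReal_mul (by positivity)
    · -- x^q ≲ F
      refine ⟨1, 2, 1, one_pos, two_pos, one_pos, ?_⟩
      intro x hx
      have hx0 : (0:ℝ) ≤ x := by linarith
      show ENNReal.ofReal (x ^ q) ≤ ENNReal.ofReal 1 * LegE _ (2 * x)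
      rw [ENNReal.ofReal_one, one_mul]
      set y : ℝ := x ^ (1 / (σ - 1)) with hydef
      have hy0 : 0 ≤ y := Real.rpow_nonneg hx0 _
      have hyσ : y ^ σ = x ^ q := by
        rw [hydef, ← Real.rpow_mul hx0, ← hq_eq]
        congr 1
        field_simp
      have h2xy : x * y = x ^ q := by
        rw [hydef]
        have hstep : x * x ^ (1 / (σ - 1)) = x ^ ((1:ℝ) + 1 / (σ - 1)) := by
          rw [Real.rpow_add' hx0 (by positivity), Real.rpow_one]
        rw [hstep, ← hq_eq]
        congr 1
        field_simp
        ring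
      have key : 2 * x * y - y ^ σ = x ^ q := by rw [mul_assoc, h2xy, hyσ]; ring
      calc ENNReal.ofReal (x ^ q) = ENNReal.ofReal (2 * x * y - y ^ σ) := by rw [key]
        _ = ENNReal.ofReal (2 * x * y) - ENNReal.ofReal (y ^ σ) :=
            ENNReal.ofReal_sub _ (Real.rpow_nonneg hy0 σ)
        _ ≤ ENNReal.ofReal (2 * x * y) -
            extLT (Leg (fun t => t ^ r)) (Leg (fun t => t ^ p) y) :=
            tsub_le_tsub_left (g_ub y hy0) _
        _ ≤ LegE (fun y => extLT (Leg (fun t => t ^ r)) (Leg (fun t => t ^ p) y)) (2 * x) :=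
            legE_ge _ (2 * x) y hy0
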